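/- arXiv:2411.19132 — 5 statements merged into one kernel-verified Lean document; each statement's English description precedes it below -/
import Mathlib

section
/- Let k ≥ 1 be an integer, θ ∈ (0,1), and set p = ⌈(k+1)(1−θ)⌉, assuming p ≤ k. Let R⁽⁰⁾, R⁽¹⁾, …, R⁽ᵏ⁾ be independent and identically distributed real-valued random variables on a probability space (Ω, 𝔽, Pr). Then Pr{ R⁽⁰⁾ ≤ C } ≥ 1 − θ, where C(ω) is the p-th smallest value among R⁽¹⁾(ω), …, R⁽ᵏ⁾(ω). -/
open MeasureTheory ProbabilityTheory
open scoped ENNReal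

open Finset

/-- For a sorted list, `x ≤ l[m]` iff at most `m` entries are `< x`. -/
lemma sorted_le_get_iff : ∀ {l : List ℝ}, l.Pairwise (· ≤ ·) → ∀ {m : ℕ} (hm : m < l.length) (x : ℝ),
    (x ≤ l.get ⟨m, hm⟩ ↔ l.countP (fun a => decide (a < x)) ≤ m) := by
  intro l hl
  induction l with
  | nil => intro m hm; simp at hm
  | cons a t ih =>
    rw [List.pairwise_cons] at hl
    obtain ⟨ha, ht⟩ := hl
    intro m hm x
    match m with
    | 0 =>
      simp only [List.get, List.countP_cons, Nat.le_zero]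
      constructor
      · intro hx
        rw [List.countP_eq_zero.2, if_neg (by simp; exact hx)]
        intro b hb
        simp only [decide_eq_true_eq]
        exact not_lt.2 (le_trans hx (ha b hb))
      · intro h
        have : ¬ (a < x) := by
          by_contra hc
          rw [if_pos (by simpa using hc)] at h; omega
        exact not_lt.1 this
    | m + 1 =>
      have hm' : m < t.length := by simpa using hm
      simp only [List.get_cons_succ, List.countP_cons]
      by_cases hax : a < x
      · rw [if_pos (by simpa using hax)]
        rw [ih ht hm' x]
        omega
      · rw [if_neg (by simpa using hax)]
        have hx : x ≤ a := not_lt.1 hax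
        have h1 : x ≤ t.get ⟨m, hm'⟩ := le_trans hx (ha _ (t.get_mem _))
        have h2 : t.countP (fun a => decide (a < x)) = 0 := by
          rw [List.countP_eq_zero]
          intro b hb
          simp only [decide_eq_true_eq]
          exact not_lt.2 (le_trans hx (ha b hb))
        simp [h2]
        exact h1

/-- For a sorted list, more than `m` entries are `≤ l[m]`. -/
lemma sorted_lt_countP_le : ∀ {l : List ℝ}, l.Pairwise (· ≤ ·) → ∀ {m : ℕ} (hm : m < l.length),
    m < l.countP (fun a => decide (a ≤ l.get ⟨m, hm⟩)) := by
  intro l hl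
  induction l with
  | nil => intro m hm; simp at hm
  | cons a t ih =>
    rw [List.pairwise_cons] at hl
    obtain ⟨ha, ht⟩ := hl
    intro m hm
    match m with
    | 0 =>
      simp only [List.get, List.countP_cons]
      rw [if_pos (by simp)]
      omega
    | m + 1 =>
      have hm' : m < t.length := by simpa using hm
      simp only [List.get_cons_succ, List.countP_cons]
      rw [if_pos (by simp; exact ha _ (t.get_mem _))]
      have := ih ht hm'
      omega

/-- The `p`-th smallest value (1-indexed) among `v 0, …, v (k-1)`:
the `p`-th entry of the list sorted in nondecreasing order. -/
noncomputable def pthSmallest {k : ℕ} (p : ℕ) (v : Fin k → ℝ) : ℝ :=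
  ((List.ofFn v).mergeSort (· ≤ ·)).getD (p - 1) 0

lemma card_filter_eq_countP {n : ℕ} (v : Fin n → ℝ) (P : ℝ → Prop) [DecidablePred P] :
    (univ.filter fun i => P (v i)).card = (List.ofFn v).countP (fun a => decide (P a)) := by
  induction n with
  | zero => simp
  | succ n ih =>
    rw [List.ofFn_succ, List.countP_cons, ← ih (fun i => v i.succ)]
    rw [Finset.card_filter, Finset.card_filter, Fin.sum_univ_succ]
    simp [add_comm]

lemma mergeSort_sorted_le (l : List ℝ) : (l.mergeSort (· ≤ ·)).Pairwise (· ≤ ·) := by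
  have := List.pairwise_mergeSort (le := fun a b : ℝ => decide (a ≤ b))
    (fun a b c hab hbc => by simp only [decide_eq_true_eq] at *; exact le_trans hab hbc)
    (fun a b => by simpa using le_total a b) l
  exact this.imp (fun h => by simpa using h)

lemma countP_mergeSort_ofFn {n : ℕ} (v : Fin n → ℝ) (q : ℝ → Bool) :
    ((List.ofFn v).mergeSort (· ≤ ·)).countP q = (List.ofFn v).countP q :=
  ((List.ofFn v).mergeSort_perm _).countP_eq q

lemma le_pthSmallest_iff {k p : ℕ} (hp1 : 1 ≤ p) (hpk : p ≤ k) (v : Fin k → ℝ) (x : ℝ) :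
    x ≤ pthSmallest p v ↔ (univ.filter fun i => v i < x).card < p := by
  set l := (List.ofFn v).mergeSort (· ≤ ·) with hl
  have hlen : l.length = k := by rw [hl, List.length_mergeSort, List.length_ofFn]
  have hm : p - 1 < l.length := by omega
  have hps : pthSmallest p v = l.get ⟨p - 1, hm⟩ := by
    rw [pthSmallest, ← hl, List.getD_eq_getElem l 0 hm]
    rfl
  rw [hps, sorted_le_get_iff (mergeSort_sorted_le _) hm x]
  rw [show l.countP (fun a => decide (a < x)) = (List.ofFn v).countP (fun a => decide (a < x))
    from countP_mergeSort_ofFn v _]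
  rw [← card_filter_eq_countP v (fun a => a < x)]
  omega

lemma p_le_countP {n p : ℕ} (hp1 : 1 ≤ p) (hpn : p ≤ n) (v : Fin n → ℝ) :
    p ≤ (List.ofFn v).countP (fun a => decide (a ≤ pthSmallest p v)) := by
  have hm : p - 1 < ((List.ofFn v).mergeSort (· ≤ ·)).length := by
    rw [List.length_mergeSort, List.length_ofFn]; omega
  have hcnt := sorted_lt_countP_le (mergeSort_sorted_le (List.ofFn v)) hm
  have hps : pthSmallest p v = ((List.ofFn v).mergeSort (· ≤ ·)).get ⟨p - 1, hm⟩ := by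
    rw [pthSmallest, List.getD_eq_getElem _ 0 hm]; rfl
  rw [hps, ← countP_mergeSort_ofFn]
  omega

lemma pigeonhole_rank {n p : ℕ} (hp1 : 1 ≤ p) (hpn : p ≤ n) (v : Fin n → ℝ) :
    p ≤ (univ.filter fun j => (univ.filter fun i => v i < v j).card < p).card := by
  have hsub : (univ.filter fun j => v j ≤ pthSmallest p v) ⊆
      (univ.filter fun j => (univ.filter fun i => v i < v j).card < p) := by
    intro j hj
    simp only [mem_filter, mem_univ, true_and] at hj ⊢
    exact (le_pthSmallest_iff hp1 hpn v (v j)).1 hj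
  refine le_trans ?_ (Finset.card_le_card hsub)
  rw [card_filter_eq_countP v (fun a => a ≤ pthSmallest p v)]
  exact p_le_countP hp1 hpn v

open MeasureTheory ProbabilityTheory Finset in
lemma bset_measurable {k p : ℕ} (j : Fin (k+1)) :
    MeasurableSet {v : Fin (k+1) → ℝ | (univ.filter fun i => v i < v j).card < p} := by
  have hmeas : Measurable (fun v : Fin (k+1) → ℝ => ∑ i : Fin (k+1), if v i < v j then 1 else 0 :
      (Fin (k+1) → ℝ) → ℕ) := by
    apply Finset.measurable_sum
    intro i _
    exact Measurable.ite (measurableSet_lt (measurable_pi_apply i) (measurable_pi_apply j))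
      measurable_const measurable_const
  have h : {v : Fin (k+1) → ℝ | (univ.filter fun i => v i < v j).card < p}
      = (fun v : Fin (k+1) → ℝ => ∑ i : Fin (k+1), if v i < v j then 1 else 0) ⁻¹' {n | n < p} := by
    ext v
    rw [Set.mem_setOf_eq, Set.mem_preimage, Set.mem_setOf_eq, Finset.card_filter]
  rw [h]
  exact hmeas MeasurableSet.of_discrete

open MeasureTheory in
lemma piCongrLeft_swap_coe {n : ℕ} (j : Fin (n+1)) :
    ⇑(MeasurableEquiv.piCongrLeft (fun _ : Fin (n+1) => ℝ) (Equiv.swap 0 j)) =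
      fun x : Fin (n+1) → ℝ => x ∘ (Equiv.swap 0 j) := by
  funext x
  funext i
  have h1 : i = (Equiv.swap 0 j) ((Equiv.swap 0 j).symm i) := ((Equiv.swap 0 j).apply_symm_apply i).symm
  calc (MeasurableEquiv.piCongrLeft (fun _ : Fin (n+1) => ℝ) (Equiv.swap 0 j)) x i
      = (MeasurableEquiv.piCongrLeft (fun _ : Fin (n+1) => ℝ) (Equiv.swap 0 j)) x
        ((Equiv.swap 0 j) ((Equiv.swap 0 j).symm i)) := by rw [← h1]
    _ = x ((Equiv.swap 0 j).symm i) :=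
        MeasurableEquiv.piCongrLeft_apply_apply (β := fun _ => ℝ) (Equiv.swap 0 j) x _
    _ = x ((Equiv.swap 0 j) i) := by rw [Equiv.symm_swap]

open Finset in
lemma card_filter_swap {n : ℕ} (v : Fin (n+1) → ℝ) (j : Fin (n+1)) :
    (univ.filter fun i => (v ∘ (Equiv.swap 0 j)) i < (v ∘ (Equiv.swap 0 j)) 0).card
      = (univ.filter fun i => v i < v j).card := by
  have h0 : (v ∘ (Equiv.swap 0 j)) 0 = v j := by simp [Equiv.swap_apply_left]
  refine Finset.card_bij (fun i _ => (Equiv.swap 0 j) i) ?_ ?_ ?_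
  · intro i hi
    simp only [mem_filter, mem_univ, true_and, Function.comp, h0] at hi ⊢
    exact hi
  · intro a _ b _ hab
    exact (Equiv.swap 0 j).injective hab
  · intro b hb
    refine ⟨(Equiv.swap 0 j).symm b, ?_, by simp⟩
    simp only [mem_filter, mem_univ, true_and, Function.comp, h0] at hb ⊢
    rwa [(Equiv.swap 0 j).apply_symm_apply]

open Finset in
lemma card_filter_succ_eq {k : ℕ} (w : Fin (k+1) → ℝ) :
    (univ.filter fun i : Fin (k+1) => w i < w 0).card
      = (univ.filter fun i : Fin k => w i.succ < w 0).card := by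
  rw [Finset.card_filter, Finset.card_filter, Fin.sum_univ_succ]
  simp

/-- **Conformal prediction quantile lemma** (Lemma 1): if `R 0, R 1, …, R k` are i.i.d.
real-valued random variables, `θ ∈ (0,1)` and `p = ⌈(k+1)(1-θ)⌉ ≤ k`, then
`Pr{R 0 ≤ C} ≥ 1 - θ`, where `C(ω)` is the `p`-th smallest value among
`R 1 ω, …, R k ω`. -/
theorem conformal_quantile_lemma
    {Ω : Type*} [MeasurableSpace Ω] (μ : Measure Ω) [IsProbabilityMeasure μ]
    (k : ℕ) (hk : 1 ≤ k) (θ : ℝ) (hθ : θ ∈ Set.Ioo (0 : ℝ) 1)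
    (p : ℕ) (hp : (p : ℤ) = ⌈((k : ℝ) + 1) * (1 - θ)⌉) (hpk : p ≤ k)
    (R : Fin (k + 1) → Ω → ℝ)
    (hmeas : ∀ i, Measurable (R i))
    (hindep : iIndepFun R μ)
    (hident : ∀ i j, μ.map (R i) = μ.map (R j)) :
    μ {ω | R 0 ω ≤ pthSmallest p (fun i : Fin k => R i.succ ω)} ≥
      ENNReal.ofReal (1 - θ) := by
  classical
  have hp1 : 1 ≤ p := by
    have h0 : (0:ℝ) < ((k:ℝ)+1) * (1-θ) := by nlinarith [hθ.1, hθ.2, Nat.cast_nonneg (α := ℝ) k]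
    have hpos : 0 < ⌈((k : ℝ) + 1) * (1 - θ)⌉ := Int.ceil_pos.2 h0
    have : (0:ℤ) < (p:ℤ) := hp ▸ hpos
    exact_mod_cast this
  set ν := μ.map (R 0) with hν
  haveI : IsProbabilityMeasure ν := Measure.isProbabilityMeasure_map (hmeas 0).aemeasurable
  set J : Ω → (Fin (k+1) → ℝ) := fun ω i => R i ω with hJdef
  have hJ : Measurable J := measurable_pi_lambda _ hmeas
  have hjoint : μ.map J = Measure.pi (fun _ : Fin (k+1) => ν) := by
    refine (Measure.pi_eq fun s hs => ?_).symm
    rw [Measure.map_apply hJ (MeasurableSet.univ_pi hs)]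
    have hpre : J ⁻¹' Set.univ.pi s = ⋂ i ∈ Finset.univ, R i ⁻¹' s i := by
      ext ω
      simp [hJdef, Set.mem_pi]
    rw [hpre, (iIndepFun_iff_measure_inter_preimage_eq_mul.1 hindep) Finset.univ (fun i _ => hs i)]
    refine Finset.prod_congr rfl fun i _ => ?_
    rw [← Measure.map_apply (hmeas i) (hs i), hident i 0]
  set B : Fin (k+1) → Set (Fin (k+1) → ℝ) :=
    fun j => {v | (Finset.univ.filter fun i => v i < v j).card < p} with hB
  have hBmeas : ∀ j, MeasurableSet (B j) := fun j => bset_measurable j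
  set A : Fin (k+1) → Set Ω := fun j => J ⁻¹' B j with hA
  have hAmeas : ∀ j, MeasurableSet (A j) := fun j => hJ (hBmeas j)
  -- exchangeability
  have hAeq : ∀ j, μ (A j) = μ (A 0) := by
    intro j
    have hswap : B j = (fun v : Fin (k+1) → ℝ => v ∘ (Equiv.swap 0 j)) ⁻¹' (B 0) := by
      ext v
      simp only [hB, Set.mem_setOf_eq, Set.mem_preimage]
      rw [card_filter_swap v j]
    have hmp := measurePreserving_piCongrLeft (fun _ : Fin (k+1) => ν) (Equiv.swap 0 j)
    rw [piCongrLeft_swap_coe j] at hmp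
    calc μ (A j) = μ.map J (B j) := (Measure.map_apply hJ (hBmeas j)).symm
      _ = Measure.pi (fun _ : Fin (k+1) => ν)
            ((fun v : Fin (k+1) → ℝ => v ∘ (Equiv.swap 0 j)) ⁻¹' (B 0)) := by
          rw [hjoint, hswap]
      _ = Measure.pi (fun _ : Fin (k+1) => ν) (B 0) :=
          hmp.measure_preimage (hBmeas 0).nullMeasurableSet
      _ = μ (A 0) := by rw [← hjoint, Measure.map_apply hJ (hBmeas 0)]
  -- pointwise pigeonhole
  have hptwise : ∀ ω, (p : ℝ≥0∞) ≤ ∑ j : Fin (k+1), (A j).indicator (fun _ => (1:ℝ≥0∞)) ω := by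
    intro ω
    have hpr := pigeonhole_rank hp1 (le_trans hpk (Nat.le_succ k)) (fun i => R i ω)
    calc (p : ℝ≥0∞)
        ≤ ((Finset.univ.filter fun j : Fin (k+1) =>
            (Finset.univ.filter fun i => R i ω < R j ω).card < p).card : ℝ≥0∞) := by
          exact_mod_cast hpr
      _ = ∑ j : Fin (k+1), (A j).indicator (fun _ => (1:ℝ≥0∞)) ω := by
          rw [Finset.card_filter, Nat.cast_sum]
          refine Finset.sum_congr rfl fun j _ => ?_
          rw [Set.indicator_apply]
          have hmem : ω ∈ A j ↔ (Finset.univ.filter fun i => R i ω < R j ω).card < p := by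
            simp only [hA, hB, Set.mem_preimage, Set.mem_setOf_eq, hJdef]
          by_cases h : (Finset.univ.filter fun i => R i ω < R j ω).card < p
          · rw [if_pos h, if_pos (hmem.2 h)]; norm_num
          · rw [if_neg h, if_neg (fun hc => h (hmem.1 hc))]; norm_num
  -- integrate
  have hsum : (p : ℝ≥0∞) ≤ ∑ j : Fin (k+1), μ (A j) := by
    have h1 : ∑ j : Fin (k+1), μ (A j)
        = ∫⁻ ω, ∑ j : Fin (k+1), (A j).indicator (fun _ => (1:ℝ≥0∞)) ω ∂μ := by
      rw [lintegral_finset_sum _ (fun j _ => measurable_const.indicator (hAmeas j))]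
      refine Finset.sum_congr rfl fun j _ => ?_
      rw [lintegral_indicator_const (hAmeas j), one_mul]
    rw [h1]
    calc (p : ℝ≥0∞) = ∫⁻ _, (p:ℝ≥0∞) ∂μ := by simp
      _ ≤ _ := lintegral_mono hptwise
  have hmain : (p : ℝ≥0∞) ≤ ((k:ℝ≥0∞) + 1) * μ (A 0) := by
    have : ∑ j : Fin (k+1), μ (A j) = ((k:ℝ≥0∞) + 1) * μ (A 0) := by
      rw [Finset.sum_congr rfl fun j _ => hAeq j, Finset.sum_const, Finset.card_univ,
        Fintype.card_fin, nsmul_eq_mul]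
      push_cast
      ring
    rwa [this] at hsum
  -- identify the target event with A 0
  have hset : {ω | R 0 ω ≤ pthSmallest p (fun i : Fin k => R i.succ ω)} = A 0 := by
    ext ω
    simp only [Set.mem_setOf_eq, hA, hB, Set.mem_preimage, hJdef]
    rw [le_pthSmallest_iff hp1 hpk, card_filter_succ_eq (fun i => R i ω)]
  rw [hset]
  -- final arithmetic
  have hceil : ((k:ℝ)+1) * (1-θ) ≤ (p:ℝ) := by
    have h1 := Int.le_ceil (((k:ℝ)+1)*(1-θ))
    rw [← hp] at h1
    exact_mod_cast h1
  have hθ1 : (0:ℝ) ≤ 1 - θ := by linarith [hθ.2]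
  have hle : ENNReal.ofReal (1-θ) * ((k:ℝ≥0∞)+1) ≤ (p : ℝ≥0∞) := by
    have hk1 : ((k:ℝ≥0∞)+1) = ENNReal.ofReal ((k:ℝ)+1) := by
      rw [ENNReal.ofReal_add (Nat.cast_nonneg k) zero_le_one]
      simp [ENNReal.ofReal_natCast]
    rw [hk1, ← ENNReal.ofReal_mul hθ1]
    calc ENNReal.ofReal ((1-θ) * ((k:ℝ)+1)) ≤ ENNReal.ofReal (p:ℝ) :=
          ENNReal.ofReal_le_ofReal (by nlinarith)
      _ = (p : ℝ≥0∞) := ENNReal.ofReal_natCast p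
  have h2 : ((k:ℝ≥0∞)+1) * ENNReal.ofReal (1-θ) ≤ ((k:ℝ≥0∞)+1) * μ (A 0) := by
    rw [mul_comm]
    exact le_trans hle hmain
  have hk0 : ((k:ℝ≥0∞)+1) ≠ 0 := by simp
  have hktop : ((k:ℝ≥0∞)+1) ≠ ⊤ := by
    simp [ENNReal.natCast_ne_top]
  exact (ENNReal.mul_le_mul_iff_right hk0 hktop).1 h2
end

section
/- Let A ∈ ℝ^{n×n}, B ∈ ℝ^{n×m}, K ∈ ℝ^{m×n}, θ ∈ (0,1), and N ≥ 1. Let 𝒳_t ⊆ ℝⁿ (t = 1,…,N), 𝒰 ⊆ ℝᵐ, E ⊆ ℝⁿ, E_u ⊆ ℝᵐ be sets. Let x₀ ∈ ℝⁿ and let z(0) = x₀, v(0), …, v(N−1) be deterministic vectors with z(t+1) = A z(t) + B v(t), z(t) ∈ 𝒳_t ⊖ E for all t ∈ {1,…,N}, and v(t) ∈ 𝒰 ⊖ E_u for all t ∈ {0,…,N−1}. On a probability space (Ω, 𝔽, Pr), let w(0), …, w(N−1) be ℝⁿ-valued random vectors, define x(0) = x₀, u(t) = K (x(t) − z(t))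 + v(t), x(t+1) = A x(t) + B u(t) + w(t), and e(t) = x(t) − z(t). If Pr{ e(t) ∈ E for all t ∈ {1,…,N} } ≥ 1 − θ and Pr{ K e(t) ∈ E_u for all t ∈ {0,…,N−1} } ≥ 1 − θ, then Pr{ x(t) ∈ 𝒳_t for all t ∈ {1,…,N} } ≥ 1 − θ and Pr{ u(t) ∈ 𝒰 for all t ∈ {0,…,N−1} } ≥ 1 − θ. -/
open MeasureTheory Matrix

/-- The Pontryagin set difference `S₁ ⊖ S₂ = {s ｜ s + s₂ ∈ S₁ for all s₂ ∈ S₂}`. -/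
def pontryaginDiff {V : Type*} [Add V] (S₁ S₂ : Set V) : Set V :=
  {s | ∀ s₂ ∈ S₂, s + s₂ ∈ S₁}

/-- **Theorem 1**: given a feasible solution `(v, z)` of the deterministic tightened problem,
the control `u(t) = K e(t) + v(t)`, with `e(t) = x(t) − z(t)`, yields state and input
trajectories of `x(t+1) = A x(t) + B u(t) + w(t)` satisfying the joint chance constraints. -/
theorem feasible_solution_chance_constraints {n m : ℕ} {Ω : Type*} [MeasurableSpace Ω]
    (μ : Measure Ω) [IsProbabilityMeasure μ]
    (A : Matrix (Fin n) (Fin n) ℝ) (B : Matrix (Fin n) (Fin m) ℝ)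
    (K : Matrix (Fin m) (Fin n) ℝ)
    (θ : ℝ) (hθ : θ ∈ Set.Ioo (0 : ℝ) 1) (N : ℕ) (hN : 1 ≤ N)
    (X : ℕ → Set (Fin n → ℝ)) (U : Set (Fin m → ℝ))
    (E : Set (Fin n → ℝ)) (Eu : Set (Fin m → ℝ))
    (x₀ : Fin n → ℝ) (z : ℕ → Fin n → ℝ) (v : ℕ → Fin m → ℝ)
    (hz0 : z 0 = x₀)
    (hzdyn : ∀ t < N, z (t + 1) = A.mulVec (z t) + B.mulVec (v t))
    (hzX : ∀ t ∈ Finset.Icc 1 N, z t ∈ pontryaginDiff (X t) E)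
    (hvU : ∀ t < N, v t ∈ pontryaginDiff U Eu)
    (w x : ℕ → Ω → Fin n → ℝ) (u : ℕ → Ω → Fin m → ℝ) (e : ℕ → Ω → Fin n → ℝ)
    (hx0 : ∀ ω, x 0 ω = x₀)
    (hu : ∀ t ω, u t ω = K.mulVec (x t ω - z t) + v t)
    (hxdyn : ∀ t < N, ∀ ω, x (t + 1) ω = A.mulVec (x t ω) + B.mulVec (u t ω) + w t ω)
    (he : ∀ t ω, e t ω = x t ω - z t)
    (hePR : μ {ω | ∀ t ∈ Finset.Icc 1 N, e t ω ∈ E} ≥ ENNReal.ofReal (1 - θ))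
    (hKePR : μ {ω | ∀ t < N, K.mulVec (e t ω) ∈ Eu} ≥ ENNReal.ofReal (1 - θ)) :
    μ {ω | ∀ t ∈ Finset.Icc 1 N, x t ω ∈ X t} ≥ ENNReal.ofReal (1 - θ) ∧
    μ {ω | ∀ t < N, u t ω ∈ U} ≥ ENNReal.ofReal (1 - θ) := by
  constructor
  · refine le_trans hePR (measure_mono ?_)
    intro ω hω t ht
    have hx : x t ω = z t + e t ω := by rw [he]; abel
    rw [hx]
    exact hzX t ht _ (hω t ht)
  · refine le_trans hKePR (measure_mono ?_)
    intro ω hω t ht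
    have hu' : u t ω = v t + K.mulVec (e t ω) := by
      rw [hu, he]; abel
    rw [hu']
    exact hvU t ht _ (hω t ht)
end

section
/- Let Φ, Y ∈ ℝ^{n×n} be symmetric positive definite, Ā ∈ ℝ^{n×n}, and λ₀, λ₁ ≥ 0 with λ₀ + λ₁ ≤ 1. If the block matrix M = [[λ₀ Φ − Āᵀ Φ Ā, −Āᵀ Φ], [−Φ Ā, λ₁ Y − Φ]] ∈ ℝ^{2n×2n} is positive semidefinite, then for all e, w ∈ ℝⁿ with eᵀ Φ e ≤ 1 and wᵀ Y w ≤ 1, it holds that (Ā e + w)ᵀ Φ (Ā e + w) ≤ 1. -/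
open Matrix

/-- **S-procedure sufficiency**: if the block matrix
`[[λ₀Φ − ĀᵀΦĀ, −ĀᵀΦ], [−ΦĀ, λ₁Y − Φ]]` is positive semidefinite with `λ₀, λ₁ ≥ 0`,
`λ₀ + λ₁ ≤ 1`, then the ellipsoid `{e ｜ eᵀΦe ≤ 1}` is robustly invariant for
`e⁺ = Āe + w` under all disturbances `w` with `wᵀYw ≤ 1`. -/
theorem s_procedure_invariance {n : ℕ} (Φ Y Abar : Matrix (Fin n) (Fin n) ℝ)
    (hΦ : Φ.PosDef) (hY : Y.PosDef) (lam₀ lam₁ : ℝ) (hlam₀ : 0 ≤ lam₀) (hlam₁ : 0 ≤ lam₁)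
    (hsum : lam₀ + lam₁ ≤ 1)
    (hM : (Matrix.fromBlocks (lam₀ • Φ - Abarᵀ * Φ * Abar) (-(Abarᵀ * Φ))
      (-(Φ * Abar)) (lam₁ • Y - Φ)).PosSemidef) :
    ∀ e w : Fin n → ℝ, e ⬝ᵥ Φ.mulVec e ≤ 1 → w ⬝ᵥ Y.mulVec w ≤ 1 →
      (Abar.mulVec e + w) ⬝ᵥ Φ.mulVec (Abar.mulVec e + w) ≤ 1 := by
  intro e w he hw
  have h := hM.dotProduct_mulVec_nonneg (Sum.elim e w)
  rw [Matrix.fromBlocks_mulVec] at h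
  simp only [RCLike.star_def, star_trivial, sumElim_dotProduct_sumElim,
    Matrix.sub_mulVec, Matrix.smul_mulVec, Matrix.neg_mulVec, Matrix.mulVec_mulVec,
    dotProduct_add, dotProduct_sub, dotProduct_smul, dotProduct_neg, smul_eq_mul, Sum.elim_comp_inl,
    Sum.elim_comp_inr] at h
  have hΦt : Φᵀ = Φ := by
    have := hΦ.1; simpa [Matrix.conjTranspose, Matrix.IsSymm] using this
  have key : (Abar.mulVec e + w) ⬝ᵥ Φ.mulVec (Abar.mulVec e + w)
      ≤ lam₀ * (e ⬝ᵥ Φ.mulVec e) + lam₁ * (w ⬝ᵥ Y.mulVec w) := by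
    have h1 : e ⬝ᵥ (Abarᵀ * Φ * Abar).mulVec e = Abar.mulVec e ⬝ᵥ Φ.mulVec (Abar.mulVec e) := by
      rw [mul_assoc, ← Matrix.mulVec_mulVec,
        ← Matrix.mulVec_mulVec, Matrix.dotProduct_mulVec, Matrix.vecMul_transpose]
    have h2 : e ⬝ᵥ (Abarᵀ * Φ).mulVec w = Abar.mulVec e ⬝ᵥ Φ.mulVec w := by
      rw [← Matrix.mulVec_mulVec, Matrix.dotProduct_mulVec, Matrix.vecMul_transpose]
    have h3 : w ⬝ᵥ (Φ * Abar).mulVec e = w ⬝ᵥ Φ.mulVec (Abar.mulVec e) := by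
      rw [← Matrix.mulVec_mulVec]
    have hsym : w ⬝ᵥ Φ.mulVec (Abar.mulVec e) = Abar.mulVec e ⬝ᵥ Φ.mulVec w := by
      rw [Matrix.dotProduct_mulVec, ← Matrix.mulVec_transpose, hΦt, dotProduct_comm]
    simp only [Matrix.mulVec_add, dotProduct_add, add_dotProduct]
    nlinarith [h, h1, h2, h3, hsym]
  have h0 : lam₀ * (e ⬝ᵥ Φ.mulVec e) ≤ lam₀ := by nlinarith
  have h1 : lam₁ * (w ⬝ᵥ Y.mulVec w) ≤ lam₁ := by nlinarith
  linarith
end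

section
/- Let A ∈ ℝ^{n×n}, B ∈ ℝ^{n×m}, let Φ̂, Y ∈ ℝ^{n×n} be symmetric positive definite, Ψ ∈ ℝ^{m×n}, and λ₀ > 0, λ₁ > 0. If the block matrix [[Φ̂ − (1/λ₁) Y⁻¹, A Φ̂ + B Ψ], [(A Φ̂ + B Ψ)ᵀ, λ₀ Φ̂]] is positive semidefinite, then, setting Φ = Φ̂⁻¹, K = Ψ Φ̂⁻¹, and Ā = A + B K, the block matrix [[λ₀ Φ − Āᵀ Φ Ā, −Āᵀ Φ], [−Φ Ā, λ₁ Y − Φ]] is positive semidefinite. -/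
open Matrix

lemma psd_smul {n : ℕ} {M : Matrix (Fin n) (Fin n) ℝ} (hM : M.PosSemidef) {c : ℝ} (hc : 0 ≤ c) :
    (c • M).PosSemidef := by
  refine ⟨?_, fun x => ?_⟩
  · unfold Matrix.IsHermitian
    rw [conjTranspose_smul, hM.1]
    simp
  · exact (hM.smul hc).2 x


set_option maxHeartbeats 1000000 in
/-- **Schur-complement linearization**: positive semidefiniteness of the linearized block
matrix `[[Φ̂ − (1/λ₁)Y⁻¹, AΦ̂ + BΨ], [(AΦ̂ + BΨ)ᵀ, λ₀Φ̂]]` implies positive semidefiniteness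
of the bilinear matrix inequality `[[λ₀Φ − ĀᵀΦĀ, −ĀᵀΦ], [−ΦĀ, λ₁Y − Φ]]`, where
`Φ = Φ̂⁻¹`, `K = ΨΦ̂⁻¹` and `Ā = A + BK`. -/
theorem schur_linearization {n m : ℕ}
    (A : Matrix (Fin n) (Fin n) ℝ) (B : Matrix (Fin n) (Fin m) ℝ)
    (Phat Y : Matrix (Fin n) (Fin n) ℝ) (hPhat : Phat.PosDef) (hY : Y.PosDef)
    (Ψ : Matrix (Fin m) (Fin n) ℝ) (lam₀ lam₁ : ℝ) (hlam₀ : 0 < lam₀) (hlam₁ : 0 < lam₁)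
    (h : (Matrix.fromBlocks (Phat - lam₁⁻¹ • Y⁻¹) (A * Phat + B * Ψ)
      (A * Phat + B * Ψ)ᵀ (lam₀ • Phat)).PosSemidef) :
    (Matrix.fromBlocks
      (lam₀ • Phat⁻¹ - (A + B * (Ψ * Phat⁻¹))ᵀ * Phat⁻¹ * (A + B * (Ψ * Phat⁻¹)))
      (-((A + B * (Ψ * Phat⁻¹))ᵀ * Phat⁻¹))
      (-(Phat⁻¹ * (A + B * (Ψ * Phat⁻¹))))
      (lam₁ • Y - Phat⁻¹)).PosSemidef := by
  set Φ := Phat⁻¹ with hΦdef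
  set Abar := A + B * (Ψ * Φ) with hAbar
  have hPunit : IsUnit Phat.det := hPhat.det_pos.ne'.isUnit
  have hYunit : IsUnit Y.det := hY.det_pos.ne'.isUnit
  have hPΦ : Phat * Φ = 1 := mul_nonsing_inv _ hPunit
  have hΦP : Φ * Phat = 1 := nonsing_inv_mul _ hPunit
  have hYi : Y * Y⁻¹ = 1 := mul_nonsing_inv _ hYunit
  have hiY : Y⁻¹ * Y = 1 := nonsing_inv_mul _ hYunit
  have hPt : Phatᵀ = Phat := by simpa using hPhat.isHermitian.eq
  have hYt : Yᵀ = Y := by simpa using hY.isHermitian.eq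
  have hΦt : Φᵀ = Φ := by rw [hΦdef, transpose_nonsing_inv, hPt]
  have hiYt : (Y⁻¹)ᵀ = Y⁻¹ := by rw [transpose_nonsing_inv, hYt]
  have hc1 : ∀ Z : Matrix (Fin n) (Fin n) ℝ, Φ * (Phat * Z) = Z := fun Z => by
    rw [← Matrix.mul_assoc, hΦP, one_mul]
  have hc2 : ∀ Z : Matrix (Fin n) (Fin n) ℝ, Phat * (Φ * Z) = Z := fun Z => by
    rw [← Matrix.mul_assoc, hPΦ, one_mul]
  have hc3 : ∀ Z : Matrix (Fin n) (Fin n) ℝ, Y⁻¹ * (Y * Z) = Z := fun Z => by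
    rw [← Matrix.mul_assoc, hiY, one_mul]
  have hc4 : ∀ Z : Matrix (Fin n) (Fin n) ℝ, Y * (Y⁻¹ * Z) = Z := fun Z => by
    rw [← Matrix.mul_assoc, hYi, one_mul]
  have hll : lam₁⁻¹ * lam₁ = 1 := inv_mul_cancel₀ hlam₁.ne'
  have hll2 : lam₁ * lam₁⁻¹ = 1 := mul_inv_cancel₀ hlam₁.ne'
  set M := A * Phat + B * Ψ with hM
  set S : Matrix (Fin n ⊕ Fin n) (Fin n ⊕ Fin n) ℝ :=
    fromBlocks (-(Φ * Abar)) (-Φ) Φ 0 with hS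
  set D : Matrix (Fin n) (Fin n ⊕ Fin n) ℝ :=
    fromCols (-(Φ * Abar)) (lam₁ • Y - Φ) with hD
  have hMΦ : M * Φ = Abar := by
    simp [hM, hAbar, add_mul, Matrix.mul_assoc, hPΦ]
  have hMt : Mᵀ = Phat * Abarᵀ := by
    simp [hM, hAbar, transpose_add, transpose_mul, hPt, hΦt, mul_add, ← Matrix.mul_assoc, hPΦ]
  clear_value Φ Abar M
  have key : Matrix.fromBlocks
      (lam₀ • Φ - Abarᵀ * Φ * Abar) (-(Abarᵀ * Φ)) (-(Φ * Abar)) (lam₁ • Y - Φ)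
      = Sᵀ * (fromBlocks (Phat - lam₁⁻¹ • Y⁻¹) M Mᵀ (lam₀ • Phat)) * S
        + Dᵀ * (lam₁⁻¹ • Y⁻¹) * D := by
    rw [hS, hD, fromBlocks_transpose, transpose_fromCols, fromBlocks_multiply,
      fromBlocks_multiply, Matrix.mul_assoc (fromRows _ _), mul_fromCols,
      fromRows_mul_fromCols, fromBlocks_add, fromBlocks_inj]
    refine ⟨?_, ?_, ?_, ?_⟩
    · -- TL
      simp only [transpose_neg, transpose_mul, transpose_zero, transpose_smul, transpose_sub, transpose_add, hYt, hiYt, hPt, smul_zero, zero_smul, smul_add, smul_sub, sub_mul, mul_sub, hΦt, hMt, smul_mul_assoc,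
        mul_smul_comm, sub_mul, mul_sub, add_mul, mul_add, neg_mul, mul_neg, neg_neg,
        Matrix.mul_assoc, hc1, hc2, hc3, hc4, hΦP, hPΦ, hiY, hYi, smul_smul, hll, hll2, one_smul,
        mul_one, one_mul, zero_mul, mul_zero, add_zero, zero_add, hMΦ]
      module
    · -- TR
      simp only [transpose_neg, transpose_mul, transpose_zero, transpose_smul, transpose_sub, transpose_add, hYt, hiYt, hPt, smul_zero, zero_smul, smul_add, smul_sub, sub_mul, mul_sub, hΦt, hMt, smul_mul_assoc,
        mul_smul_comm, sub_mul, mul_sub, add_mul, mul_add, neg_mul, mul_neg, neg_neg,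
        Matrix.mul_assoc, hc1, hc2, hc3, hc4, hΦP, hPΦ, hiY, hYi, smul_smul, hll, hll2, one_smul,
        mul_one, one_mul, zero_mul, mul_zero, add_zero, zero_add, hMΦ]
      module
    · -- BL
      simp only [transpose_neg, transpose_mul, transpose_zero, transpose_smul, transpose_sub, transpose_add, hYt, hiYt, hPt, smul_zero, zero_smul, smul_add, smul_sub, sub_mul, mul_sub, hΦt, hMt, smul_mul_assoc,
        mul_smul_comm, sub_mul, mul_sub, add_mul, mul_add, neg_mul, mul_neg, neg_neg,
        Matrix.mul_assoc, hc1, hc2, hc3, hc4, hΦP, hPΦ, hiY, hYi, smul_smul, hll, hll2, one_smul,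
        mul_one, one_mul, zero_mul, mul_zero, add_zero, zero_add, hMΦ]
      module
    · -- BR
      simp only [transpose_neg, transpose_mul, transpose_zero, transpose_smul, transpose_sub, transpose_add, hYt, hiYt, hPt, smul_zero, zero_smul, smul_add, smul_sub, sub_mul, mul_sub, hΦt, hMt, smul_mul_assoc,
        mul_smul_comm, sub_mul, mul_sub, add_mul, mul_add, neg_mul, mul_neg, neg_neg,
        Matrix.mul_assoc, hc1, hc2, hc3, hc4, hΦP, hPΦ, hiY, hYi, smul_smul, hll, hll2, one_smul,
        mul_one, one_mul, zero_mul, mul_zero, add_zero, zero_add, hMΦ]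
      module
  rw [key]
  have hSc : Sᴴ = Sᵀ := by ext i j; simp [conjTranspose_apply]
  have hDc : Dᴴ = Dᵀ := by ext i j; simp [conjTranspose_apply]
  have h1 := h.conjTranspose_mul_mul_same S
  rw [hSc] at h1
  have h2 := (psd_smul hY.inv.posSemidef (le_of_lt (inv_pos.mpr hlam₁))).conjTranspose_mul_mul_same D
  rw [hDc] at h2
  exact h1.add h2
end

section
/- Let Φ̂ ∈ ℝ^{n×n} and Q ∈ ℝ^{m×m} be symmetric positive definite, Ψ ∈ ℝ^{m×n}, and let Q^{1/2} denote the unique symmetric positive definite square root of Q. If the block matrix [[Φ̂, Ψᵀ Q^{1/2}], [Q^{1/2} Ψ, I_m]] is positive definite, then, setting Φ = Φ̂⁻¹ and K = Ψ Φ̂⁻¹, for every e ∈ ℝⁿ with eᵀ Φ e ≤ 1 it holds that (K e)ᵀ Q (K e) < 1; in particular the set ℰ_u = { K e : eᵀ Φ e ≤ 1 } is contained in the interior of 𝒰 = { u ∈ ℝᵐ : uᵀ Q u ≤ 1 }. -/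
open Matrix

/-- The square root of a positive semidefinite matrix, as defined in the older Mathlib
(removed since; restated here with its old definition). -/
noncomputable def Matrix.PosSemidef.sqrt {n 𝕜 : Type*} [Fintype n] [RCLike 𝕜] [PartialOrder 𝕜]
    [StarOrderedRing 𝕜] [DecidableEq n]
    {A : Matrix n n 𝕜} (hA : A.PosSemidef) : Matrix n n 𝕜 :=
  hA.1.eigenvectorUnitary.1 * diagonal ((↑) ∘ (√·) ∘ hA.1.eigenvalues) *
    (star hA.1.eigenvectorUnitary : Matrix n n 𝕜)

/-- **Input admissibility (LMI (14))**: if the block matrix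
`[[Φ̂, ΨᵀQ^{1/2}], [Q^{1/2}Ψ, I]]` is positive definite (with `Q^{1/2}` the unique
symmetric positive definite square root of `Q`), then with `Φ = Φ̂⁻¹` and `K = ΨΦ̂⁻¹`,
every `e` with `eᵀΦe ≤ 1` satisfies `(Ke)ᵀQ(Ke) < 1`; in particular
`ℰ_u = {Ke ｜ eᵀΦe ≤ 1}` is contained in the interior of `𝒰 = {u ｜ uᵀQu ≤ 1}`. -/
theorem input_admissibility {n m : ℕ}
    (Phat : Matrix (Fin n) (Fin n) ℝ) (hPhat : Phat.PosDef)
    (Q : Matrix (Fin m) (Fin m) ℝ) (hQ : Q.PosDef) (Ψ : Matrix (Fin m) (Fin n) ℝ)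
    (h : (Matrix.fromBlocks Phat (Ψᵀ * hQ.posSemidef.sqrt) (hQ.posSemidef.sqrt * Ψ)
      (1 : Matrix (Fin m) (Fin m) ℝ)).PosDef) :
    (∀ e : Fin n → ℝ, e ⬝ᵥ Phat⁻¹.mulVec e ≤ 1 →
      ((Ψ * Phat⁻¹).mulVec e) ⬝ᵥ Q.mulVec ((Ψ * Phat⁻¹).mulVec e) < 1) ∧
    {u : Fin m → ℝ | ∃ e : Fin n → ℝ, e ⬝ᵥ Phat⁻¹.mulVec e ≤ 1 ∧
        u = (Ψ * Phat⁻¹).mulVec e} ⊆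
      interior {u : Fin m → ℝ | u ⬝ᵥ Q.mulVec u ≤ 1} := by
  set s := hQ.posSemidef.sqrt with hs
  have hss : s * s = Q := by
    have hst := hQ.posSemidef.1.spectral_theorem
    have hU : (star hQ.posSemidef.1.eigenvectorUnitary : Matrix (Fin m) (Fin m) ℝ) *
        (hQ.posSemidef.1.eigenvectorUnitary : Matrix (Fin m) (Fin m) ℝ) = 1 :=
      Unitary.coe_star_mul_self _
    rw [hs, Matrix.PosSemidef.sqrt]
    conv_rhs => rw [hst]
    rw [Unitary.conjStarAlgAut_apply]
    simp only [Matrix.mul_assoc]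
    rw [← Matrix.mul_assoc (star hQ.posSemidef.1.eigenvectorUnitary : Matrix (Fin m) (Fin m) ℝ), hU,
      Matrix.one_mul, ← Matrix.mul_assoc (diagonal _), diagonal_mul_diagonal]
    congr 3
    funext i
    simp [Real.mul_self_sqrt (hQ.posSemidef.eigenvalues_nonneg i)]
  -- Schur complement positivity from the block LMI
  have key : ∀ a : Fin n → ℝ, a ≠ 0 →
      (Ψ.mulVec a) ⬝ᵥ Q.mulVec (Ψ.mulVec a) < a ⬝ᵥ Phat.mulVec a := by
    intro a ha
    set b : Fin m → ℝ := -((s * Ψ).mulVec a) with hb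
    have hne : Sum.elim a b ≠ 0 := by
      intro hz
      apply ha
      funext i
      have := congrFun hz (Sum.inl i)
      simpa using this
    have hpos := h.dotProduct_mulVec_pos hne
    have hmv : (fromBlocks Phat (Ψᵀ * s) (s * Ψ) 1).mulVec (Sum.elim a b)
        = Sum.elim (Phat.mulVec a + (Ψᵀ * s).mulVec b) ((s * Ψ).mulVec a + b) := by
      rw [fromBlocks_mulVec]
      simp
    rw [hmv] at hpos
    have h2 : (s * Ψ).mulVec a + b = 0 := by simp [hb]
    have hdot : Sum.elim a b ⬝ᵥ Sum.elim (Phat.mulVec a + (Ψᵀ * s).mulVec b) (0 : Fin m → ℝ)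
        = a ⬝ᵥ Phat.mulVec a + a ⬝ᵥ (Ψᵀ * s).mulVec b := by
      simp [sumElim_dotProduct_sumElim, dotProduct_add]
    simp only [star_trivial] at hpos
    rw [h2, hdot] at hpos
    have hrw : a ⬝ᵥ (Ψᵀ * s).mulVec b = -((Ψ.mulVec a) ⬝ᵥ Q.mulVec (Ψ.mulVec a)) := by
      rw [hb]
      rw [Matrix.mulVec_neg, dotProduct_neg, neg_inj]
      rw [← Matrix.mulVec_mulVec, ← Matrix.mulVec_mulVec, ← hss]
      rw [Matrix.dotProduct_mulVec]
      rw [Matrix.vecMul_transpose]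
      rw [Matrix.mulVec_mulVec]
    rw [hrw] at hpos
    linarith
  have main : ∀ e : Fin n → ℝ, e ⬝ᵥ Phat⁻¹.mulVec e ≤ 1 →
      ((Ψ * Phat⁻¹).mulVec e) ⬝ᵥ Q.mulVec ((Ψ * Phat⁻¹).mulVec e) < 1 := by
    intro e he
    set a : Fin n → ℝ := Phat⁻¹.mulVec e with ha
    have hPa : Phat.mulVec a = e := by
      rw [ha, Matrix.mulVec_mulVec, Matrix.mul_nonsing_inv _ (isUnit_iff_ne_zero.mpr hPhat.det_pos.ne'), Matrix.one_mulVec]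
    have hKe : (Ψ * Phat⁻¹).mulVec e = Ψ.mulVec a := by
      rw [← Matrix.mulVec_mulVec]
    rw [hKe]
    by_cases haz : a = 0
    · simp [haz]
    · have h1 := key a haz
      have h2 : a ⬝ᵥ Phat.mulVec a ≤ 1 := by
        rw [hPa]
        calc a ⬝ᵥ e = e ⬝ᵥ a := dotProduct_comm _ _
        _ ≤ 1 := he
      linarith
  refine ⟨main, ?_⟩
  have hc : Continuous fun u : Fin m → ℝ => u ⬝ᵥ Q.mulVec u := by
    simp only [dotProduct, mulVec]
    exact continuous_finset_sum _ fun i _ => (continuous_apply i).mul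
      (continuous_finset_sum _ fun j _ => continuous_const.mul (continuous_apply j))
  have hopen : IsOpen {u : Fin m → ℝ | u ⬝ᵥ Q.mulVec u < 1} :=
    isOpen_lt hc continuous_const
  intro u hu
  obtain ⟨e, he, rfl⟩ := hu
  have hsub : {u : Fin m → ℝ | u ⬝ᵥ Q.mulVec u < 1} ⊆
      interior {u : Fin m → ℝ | u ⬝ᵥ Q.mulVec u ≤ 1} :=
    interior_maximal (fun v (hv : v ⬝ᵥ Q.mulVec v < 1) => le_of_lt hv) hopen
  exact hsub (main e he)
end
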